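/- Let A_τ ∈ ℝ^{n×n}, B_τ ∈ ℝ^{n×m}, K ∈ ℝ^{m×n}, and Q ∈ ℝ^{n×n}, R ∈ ℝ^{m×m}. Assume F := A_τ − B_τK is Schur stable and that S ∈ ℝ^{n×n} satisfies the Lyapunov equation FᵀSF − S + Q + KᵀRK = 0. Let x : ℕ → ℝ^n satisfy x[r+1] = F x[r] and set u[r] := −K x[r]. Then the series J_LQR := Σ_{r=0}^{∞} ( x[r]ᵀ Q x[r] + u[r]ᵀ R u[r] ) converges and equals x[0]ᵀ S x[0]. -/

import Mathlib

open Matrix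

/-- A real square matrix is Schur stable if every eigenvalue of it, regarded as a complex
matrix, has modulus strictly less than `1`. -/
def SchurStable {ι : Type*} [Fintype ι] [DecidableEq ι] (A : Matrix ι ι ℝ) : Prop :=
  ∀ μ : ℂ, ((A.map Complex.ofReal).charpoly).IsRoot μ → ‖μ‖ < 1

section Aux

open Filter Topology Polynomial

attribute [local instance] Matrix.linftyOpNormedRing Matrix.linftyOpNormedAlgebra

lemma aux_spectrum_isRoot {N : ℕ} (M : Matrix (Fin N) (Fin N) ℂ) {μ : ℂ}
    (hμ : μ ∈ spectrum ℂ M) : M.charpoly.IsRoot μ := by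
  by_contra h
  rw [spectrum.mem_iff] at hμ
  apply hμ
  rw [Matrix.isUnit_iff_isUnit_det]
  apply isUnit_iff_ne_zero.mpr
  intro hdet
  apply h
  have hev : M.charpoly.eval μ = (Matrix.scalar (Fin N) μ - M).det := by
    rw [Matrix.charpoly, _root_.eval_det, Matrix.matPolyEquiv_charmatrix]
    simp
  have halg : (algebraMap ℂ (Matrix (Fin N) (Fin N) ℂ)) μ = Matrix.scalar (Fin N) μ := rfl
  rw [Polynomial.IsRoot, hev, ← halg]
  simpa using hdet

lemma aux_pow_norm_decay {N : ℕ} (M : Matrix (Fin N) (Fin N) ℂ)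
    (h : ∀ μ : ℂ, M.charpoly.IsRoot μ → ‖μ‖ < 1) :
    ∃ ρ : NNReal, ρ < 1 ∧ ∃ C : ℕ, ∀ r : ℕ, r ≥ C → ‖M ^ r‖ ≤ (ρ : ℝ) ^ r := by
  haveI : CompleteSpace (Matrix (Fin N) (Fin N) ℂ) := FiniteDimensional.complete ℂ _
  -- spectral radius < 1
  have hfin : (spectrum ℂ M).Finite := by
    apply Set.Finite.subset (Polynomial.finite_setOf_isRoot (p := M.charpoly)
      (Matrix.charpoly_monic M).ne_zero)
    exact fun μ hμ => aux_spectrum_isRoot M hμ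
  have hsr : spectralRadius ℂ M < 1 := by
    rw [spectralRadius]
    have hle : (⨆ μ ∈ spectrum ℂ M, (‖μ‖₊ : ENNReal)) ≤
        ((hfin.toFinset.sup fun μ => ‖μ‖₊ : NNReal) : ENNReal) := by
      refine iSup₂_le fun μ hμ => ?_
      exact_mod_cast Finset.le_sup (hfin.mem_toFinset.mpr hμ)
    refine lt_of_le_of_lt hle ?_
    rw [show (1 : ENNReal) = ((1 : NNReal) : ENNReal) from rfl, ENNReal.coe_lt_coe]
    rw [Finset.sup_lt_iff (by norm_num : (⊥ : NNReal) < 1)]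
    intro μ hμ
    have := h μ (aux_spectrum_isRoot M (hfin.mem_toFinset.mp hμ))
    rw [← NNReal.coe_lt_coe]
    simpa [Complex.norm_def] using this
  obtain ⟨ρ, hρ1, hρ2⟩ := ENNReal.lt_iff_exists_nnreal_btwn.mp hsr
  refine ⟨ρ, by exact_mod_cast hρ2, ?_⟩
  have htend := spectrum.pow_nnnorm_pow_one_div_tendsto_nhds_spectralRadius M
  have hev : ∀ᶠ r : ℕ in atTop, ((‖M ^ r‖₊ : ENNReal)) ^ (1 / (r : ℝ)) < (ρ : ENNReal) :=
    htend.eventually_lt_const hρ1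
  obtain ⟨C, hC⟩ := (hev.and (eventually_ge_atTop 1)).exists_forall_of_atTop
  refine ⟨C, fun r hr => ?_⟩
  obtain ⟨h1, h2⟩ := hC r hr
  have hr0 : (r : ℝ) ≠ 0 := by positivity
  have key : ((‖M ^ r‖₊ : ENNReal)) ≤ (ρ : ENNReal) ^ (r : ℝ) := by
    have := ENNReal.rpow_le_rpow h1.le (by positivity : (0:ℝ) ≤ (r:ℝ))
    rwa [← ENNReal.rpow_mul, one_div_mul_cancel hr0, ENNReal.rpow_one] at this
  rw [← ENNReal.coe_rpow_of_nonneg _ (by positivity), ENNReal.coe_le_coe] at key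
  have : ‖M ^ r‖₊ ≤ ρ ^ r := by
    rwa [← NNReal.rpow_natCast ρ r]
  calc ‖M ^ r‖ = ((‖M ^ r‖₊ : NNReal) : ℝ) := rfl
    _ ≤ ((ρ ^ r : NNReal) : ℝ) := by exact_mod_cast this
    _ = (ρ : ℝ) ^ r := by push_cast; ring

lemma aux_quad_bound {N : ℕ} (A : Matrix (Fin N) (Fin N) ℝ) (v : Fin N → ℝ) (b : ℝ)
    (hb0 : 0 ≤ b) (hb : ∀ i, |v i| ≤ b) :
    |v ⬝ᵥ A *ᵥ v| ≤ (∑ i, ∑ j, |A i j|) * b ^ 2 := by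
  have : v ⬝ᵥ A *ᵥ v = ∑ i, ∑ j, v i * (A i j * v j) := by
    simp [dotProduct, Matrix.mulVec, Finset.mul_sum]
  rw [this]
  calc |∑ i, ∑ j, v i * (A i j * v j)| ≤ ∑ i, |∑ j, v i * (A i j * v j)| :=
        Finset.abs_sum_le_sum_abs _ _
    _ ≤ ∑ i, ∑ j, |v i * (A i j * v j)| :=
        Finset.sum_le_sum fun i _ => Finset.abs_sum_le_sum_abs _ _
    _ ≤ ∑ i, ∑ j, |A i j| * b ^ 2 := by
        refine Finset.sum_le_sum fun i _ => Finset.sum_le_sum fun j _ => ?_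
        rw [abs_mul, abs_mul]
        calc |v i| * (|A i j| * |v j|) = |A i j| * (|v i| * |v j|) := by ring
          _ ≤ |A i j| * (b * b) := by
              refine mul_le_mul_of_nonneg_left ?_ (abs_nonneg _)
              exact mul_le_mul (hb i) (hb j) (abs_nonneg _) hb0
          _ = |A i j| * b ^ 2 := by ring
    _ = (∑ i, ∑ j, |A i j|) * b ^ 2 := by rw [Finset.sum_mul]; congr 1; ext i; rw [Finset.sum_mul]

lemma aux_quad_transpose {N m : ℕ} (B : Matrix (Fin m) (Fin N) ℝ)
    (S : Matrix (Fin m) (Fin m) ℝ) (v : Fin N → ℝ) :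
    v ⬝ᵥ (Bᵀ * S * B) *ᵥ v = (B *ᵥ v) ⬝ᵥ S *ᵥ (B *ᵥ v) := by
  rw [← Matrix.mulVec_mulVec, ← Matrix.mulVec_mulVec, Matrix.dotProduct_mulVec,
    Matrix.vecMul_transpose]

theorem stmt9 {n m : ℕ} (Aτ : Matrix (Fin n) (Fin n) ℝ) (Bτ : Matrix (Fin n) (Fin m) ℝ)
    (K : Matrix (Fin m) (Fin n) ℝ) (Q : Matrix (Fin n) (Fin n) ℝ) (R : Matrix (Fin m) (Fin m) ℝ)
    (F : Matrix (Fin n) (Fin n) ℝ) (hF : F = Aτ - Bτ * K) (hFs : SchurStable F)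
    (S : Matrix (Fin n) (Fin n) ℝ) (hS : Fᵀ * S * F - S + Q + Kᵀ * R * K = 0)
    (x : ℕ → Fin n → ℝ) (hx : ∀ r : ℕ, x (r + 1) = F.mulVec (x r))
    (u : ℕ → Fin m → ℝ) (hu : ∀ r : ℕ, u r = -(K.mulVec (x r))) :
    HasSum (fun r : ℕ => (x r) ⬝ᵥ (Q.mulVec (x r)) + (u r) ⬝ᵥ (R.mulVec (u r)))
      ((x 0) ⬝ᵥ (S.mulVec (x 0))) := by
  classical
  set g : ℕ → ℝ := fun r => (x r) ⬝ᵥ S *ᵥ (x r) with hg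
  -- algebraic identity : the summand telescopes
  have hQ : Q = S - Fᵀ * S * F - Kᵀ * R * K := by
    rw [← sub_eq_zero, ← hS]; abel
  have hterm : ∀ r : ℕ, (x r) ⬝ᵥ (Q.mulVec (x r)) + (u r) ⬝ᵥ (R.mulVec (u r))
      = g r - g (r + 1) := by
    intro r
    have hu' : (u r) ⬝ᵥ (R.mulVec (u r)) = (x r) ⬝ᵥ (Kᵀ * R * K) *ᵥ (x r) := by
      rw [hu r, Matrix.mulVec_neg, neg_dotProduct, dotProduct_neg, neg_neg,
        aux_quad_transpose]
    rw [hu', hQ, hg]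
    simp only [Matrix.sub_mulVec, dotProduct_sub, hx r, aux_quad_transpose]
    ring
  -- complex matrix and decay
  set M : Matrix (Fin n) (Fin n) ℂ := F.map Complex.ofReal with hM
  obtain ⟨ρ, hρ1, C, hC⟩ := aux_pow_norm_decay M hFs
  -- x r as complex vector
  set z : ℕ → Fin n → ℂ := fun r i => (x r i : ℂ) with hz
  have hzr : ∀ r : ℕ, z r = (M ^ r) *ᵥ (z 0) := by
    intro r
    induction r with
    | zero => simp
    | succ r ih =>
      have : z (r + 1) = M *ᵥ (z r) := by
        funext i
        simp only [hz, hx r, Matrix.mulVec, dotProduct, hM, Matrix.map_apply]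
        push_cast
        rfl
      rw [this, ih, Matrix.mulVec_mulVec, pow_succ']
  have hxb : ∀ r : ℕ, ∀ i, |x r i| ≤ ‖M ^ r‖ * ‖z 0‖ := by
    intro r i
    have h1 : |x r i| = ‖z r i‖ := by simp [hz]
    rw [h1, hzr r]
    exact (norm_le_pi_norm _ i).trans (Matrix.linfty_opNorm_mulVec _ _)
  have hMnn : ∀ r : ℕ, 0 ≤ ‖M ^ r‖ * ‖z 0‖ := fun r => by positivity
  -- bound on the terms
  set DQ : ℝ := ∑ i, ∑ j, |(S - Fᵀ * S * F - Kᵀ * R * K + Kᵀ * R * K) i j| with hDQ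
  set DS : ℝ := ∑ i, ∑ j, |S i j| with hDS
  have hgb : ∀ r : ℕ, |g r| ≤ DS * (‖M ^ r‖ * ‖z 0‖) ^ 2 := fun r =>
    aux_quad_bound S (x r) _ (hMnn r) (hxb r)
  have hρ0 : (0:ℝ) ≤ (ρ:ℝ) := ρ.coe_nonneg
  have hρ1' : (ρ:ℝ) < 1 := hρ1
  have hsq : (ρ:ℝ) ^ 2 < 1 := by nlinarith
  have hDS0 : (0:ℝ) ≤ DS := by rw [hDS]; positivity
  have hgb' : ∀ r : ℕ, r ≥ C → |g r| ≤ DS * ‖z 0‖ ^ 2 * ((ρ:ℝ) ^ 2) ^ r := by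
    intro r hr
    calc |g r| ≤ DS * (‖M ^ r‖ * ‖z 0‖) ^ 2 := hgb r
      _ ≤ DS * (((ρ:ℝ) ^ r) * ‖z 0‖) ^ 2 := by
          refine mul_le_mul_of_nonneg_left ?_ hDS0
          exact pow_le_pow_left₀ (hMnn r)
            (mul_le_mul_of_nonneg_right (hC r hr) (norm_nonneg _)) 2
      _ = DS * ‖z 0‖ ^ 2 * ((ρ : ℝ) ^ 2) ^ r := by ring
  -- g tends to zero
  have hz0 : Filter.Tendsto g Filter.atTop (nhds 0) := by
    have hb : Filter.Tendsto (fun r : ℕ => DS * ‖z 0‖ ^ 2 * ((ρ : ℝ) ^ 2) ^ r)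
        Filter.atTop (nhds 0) := by
      rw [show (0:ℝ) = DS * ‖z 0‖ ^ 2 * 0 by ring]
      exact Filter.Tendsto.const_mul _
        (tendsto_pow_atTop_nhds_zero_of_lt_one (by positivity) hsq)
    refine squeeze_zero_norm' ?_ hb
    filter_upwards [Filter.eventually_ge_atTop C] with r hr
    exact hgb' r hr
  -- summability
  have hsum : Summable (fun r : ℕ => (x r) ⬝ᵥ (Q.mulVec (x r)) + (u r) ⬝ᵥ (R.mulVec (u r))) := by
    apply Summable.of_norm_bounded_eventually_nat
      (g := fun r => (DS + DS) * ‖z 0‖ ^ 2 * ((ρ : ℝ) ^ 2) ^ r)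
    · exact Summable.mul_left _ (summable_geometric_of_lt_one (by positivity) hsq)
    · filter_upwards [Filter.eventually_ge_atTop C] with r hr
      rw [hterm r]
      have h1 := hgb' r hr
      have h2 := hgb' (r+1) (le_trans hr (Nat.le_succ r))
      have h3 : ((ρ:ℝ) ^ 2) ^ (r+1) ≤ ((ρ:ℝ) ^ 2) ^ r :=
        pow_le_pow_of_le_one (by positivity) hsq.le (Nat.le_succ r)
      have h4 : 0 ≤ DS * ‖z 0‖ ^ 2 := by positivity
      calc ‖g r - g (r+1)‖ = |g r - g (r+1)| := rfl
        _ ≤ |g r| + |g (r+1)| := abs_sub _ _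
        _ ≤ DS * ‖z 0‖ ^ 2 * ((ρ:ℝ) ^ 2) ^ r + DS * ‖z 0‖ ^ 2 * ((ρ:ℝ) ^ 2) ^ (r+1) := by
            gcongr
        _ ≤ (DS + DS) * ‖z 0‖ ^ 2 * ((ρ:ℝ) ^ 2) ^ r := by nlinarith
  rw [hsum.hasSum_iff_tendsto_nat]
  have hps : ∀ N : ℕ, ∑ r ∈ Finset.range N,
      ((x r) ⬝ᵥ (Q.mulVec (x r)) + (u r) ⬝ᵥ (R.mulVec (u r))) = g 0 - g N := by
    intro N
    rw [Finset.sum_congr rfl fun r _ => hterm r]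
    exact Finset.sum_range_sub' g N
  simp only [hps]
  have : Filter.Tendsto (fun N : ℕ => g 0 - g N) Filter.atTop (nhds (g 0 - 0)) :=
    Filter.Tendsto.sub tendsto_const_nhds hz0
  simpa using this

end Aux
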